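/- arXiv:2303.09948 — 3 statements merged into one kernel-verified Lean document; each statement's English description precedes it below -/
import Mathlib

section
/- Filtration refinement: Let Γ be a Sub-closed set of formulas, M = (W,(R_◇),θ) a model, and M̂ a Γ-filtration of M whose carrier is W/∼_Δ for some finite set Δ of formulas. Then for every equivalence ∼ on W finer than ∼_Δ there exists a Γ-filtration M̂' of M with carrier W/∼ such that for every formula φ, M̂ ⊨ φ iff M̂' ⊨ φ. Moreover the map sending a ∼-class to the ∼_Δ-class containing it satisfies: M̂',u ⊨ φ iff M̂, uΔ ⊨ φ for all u and φ. -/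
inductive Fm (A : Type) : Type
  | bot : Fm A
  | var : ℕ → Fm A
  | imp : Fm A → Fm A → Fm A
  | dia : A → Fm A → Fm A

namespace Fm
variable {A B : Type}
def neg (φ : Fm A) : Fm A := imp φ bot
def disj (φ ψ : Fm A) : Fm A := imp (neg φ) ψ
def conj (φ ψ : Fm A) : Fm A := neg (imp φ (neg ψ))
def equiv (φ ψ : Fm A) : Fm A := conj (imp φ ψ) (imp ψ φ)
def box (a : A) (φ : Fm A) : Fm A := neg (dia a (neg φ))
def map (f : A → B) : Fm A → Fm B
  | bot => bot
  | var n => var n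
  | imp φ ψ => imp (map f φ) (map f ψ)
  | dia a φ => dia (f a) (map f φ)
end Fm

structure Model (A : Type) where
  W : Type
  R : A → W → W → Prop
  V : ℕ → W → Prop

def Sat {A : Type} (M : Model A) : M.W → Fm A → Prop
  | _, .bot => False
  | x, .var n => M.V n x
  | x, .imp φ ψ => Sat M x φ → Sat M x ψ
  | x, .dia a φ => ∃ y, M.R a x y ∧ Sat M y φ

def Model.valid {A : Type} (M : Model A) (φ : Fm A) : Prop := ∀ x, Sat M x φ

def Model.validSet {A : Type} (M : Model A) (L : Set (Fm A)) : Prop := ∀ φ ∈ L, M.valid φ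

def SubClosed {A : Type} (Γ : Set (Fm A)) : Prop :=
  (∀ φ ψ : Fm A, Fm.imp φ ψ ∈ Γ → φ ∈ Γ ∧ ψ ∈ Γ) ∧
  (∀ (a : A) (φ : Fm A), Fm.dia a φ ∈ Γ → φ ∈ Γ)

/-- `x ∼_Γ y`: x and y satisfy the same formulas of Γ in M. -/
def ModEqv {A : Type} (M : Model A) (Γ : Set (Fm A)) (x y : M.W) : Prop :=
  ∀ φ ∈ Γ, (Sat M x φ ↔ Sat M y φ)

def eqvSetoid {A : Type} (M : Model A) (Γ : Set (Fm A)) : Setoid M.W :=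
  ⟨ModEqv M Γ, ⟨fun _ _ _ => Iff.rfl, fun h φ hφ => (h φ hφ).symm,
    fun h1 h2 φ hφ => (h1 φ hφ).trans (h2 φ hφ)⟩⟩

def filtModel {A : Type} (M : Model A) (s : Setoid M.W)
    (R' : A → Quotient s → Quotient s → Prop) (V' : ℕ → Quotient s → Prop) : Model A :=
  ⟨Quotient s, R', V'⟩

/-- `(filtModel M s R' V')` is a Γ-filtration of M through the equivalence s. -/
structure IsModalFiltration {A : Type} (M : Model A) (Γ : Set (Fm A)) (s : Setoid M.W)
    (R' : A → Quotient s → Quotient s → Prop) (V' : ℕ → Quotient s → Prop) : Prop where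
  refines : ∀ x y : M.W, s.r x y → ModEqv M Γ x y
  val : ∀ n : ℕ, Fm.var n ∈ Γ → ∀ x : M.W, (V' n (Quotient.mk s x) ↔ M.V n x)
  min_sub : ∀ (a : A) (x y : M.W), M.R a x y → R' a (Quotient.mk s x) (Quotient.mk s y)
  sub_max : ∀ (a : A) (x y : M.W), R' a (Quotient.mk s x) (Quotient.mk s y) →
      ∀ φ : Fm A, Fm.dia a φ ∈ Γ → Sat M y φ → Sat M x (Fm.dia a φ)

/-- L admits definable filtration. -/
def AdmitsDefFilt {A : Type} (L : Set (Fm A)) : Prop :=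
  ∀ M : Model A, M.validSet L → ∀ Γ : Set (Fm A), Γ.Finite → SubClosed Γ →
    ∃ Δ : Set (Fm A), Δ.Finite ∧ Γ ⊆ Δ ∧
      ∃ (R' : A → Quotient (eqvSetoid M Δ) → Quotient (eqvSetoid M Δ) → Prop)
        (V' : ℕ → Quotient (eqvSetoid M Δ) → Prop),
        Finite (Quotient (eqvSetoid M Δ)) ∧
        IsModalFiltration M Γ (eqvSetoid M Δ) R' V' ∧
        (filtModel M (eqvSetoid M Δ) R' V').validSet L

def liftQ {α : Type} (t s : Setoid α) (ht : ∀ x y : α, t.r x y → s.r x y) :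
    Quotient t → Quotient s :=
  Quotient.lift (Quotient.mk s) (fun a b h => Quotient.sound (ht a b h))

/-- Filtration refinement (Proposition 1). -/
theorem filtration_refinement {A : Type} (M : Model A) (Γ Δ : Set (Fm A))
    (hΓ : SubClosed Γ) (hΔfin : Δ.Finite)
    (R' : A → Quotient (eqvSetoid M Δ) → Quotient (eqvSetoid M Δ) → Prop)
    (V' : ℕ → Quotient (eqvSetoid M Δ) → Prop)
    (hf : IsModalFiltration M Γ (eqvSetoid M Δ) R' V')
    (t : Setoid M.W) (ht : ∀ x y : M.W, t.r x y → (eqvSetoid M Δ).r x y) :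
    ∃ (R'' : A → Quotient t → Quotient t → Prop) (V'' : ℕ → Quotient t → Prop),
      IsModalFiltration M Γ t R'' V'' ∧
      (∀ (u : Quotient t) (φ : Fm A),
        Sat (filtModel M t R'' V'') u φ ↔
          Sat (filtModel M (eqvSetoid M Δ) R' V') (liftQ t (eqvSetoid M Δ) ht u) φ) ∧
      (∀ φ : Fm A,
        (filtModel M t R'' V'').valid φ ↔ (filtModel M (eqvSetoid M Δ) R' V').valid φ) := by
  have key : ∀ (φ : Fm A) (u : Quotient t),
      Sat (filtModel M t (fun a u v => R' a (liftQ t _ ht u) (liftQ t _ ht v))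
        (fun n u => V' n (liftQ t _ ht u))) u φ ↔
      Sat (filtModel M (eqvSetoid M Δ) R' V') (liftQ t _ ht u) φ := by
    intro φ
    induction φ with
    | bot => intro u; exact Iff.rfl
    | var n => intro u; exact Iff.rfl
    | imp φ ψ ihφ ihψ => intro u; exact imp_congr (ihφ u) (ihψ u)
    | dia a φ ih =>
      intro u
      constructor
      · rintro ⟨v, hR, hv⟩
        exact ⟨liftQ t _ ht v, hR, (ih v).mp hv⟩
      · rintro ⟨v, hR, hv⟩
        obtain ⟨y, rfl⟩ := Quotient.exists_rep v
        exact ⟨Quotient.mk t y, hR, (ih _).mpr hv⟩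
  refine ⟨_, _, ?_, fun u φ => key φ u, ?_⟩
  · exact ⟨fun x y hxy φ hφ => hf.refines x y (ht x y hxy) φ hφ,
      fun n hn x => hf.val n hn x,
      fun a x y hxy => hf.min_sub a x y hxy,
      fun a x y hR φ hφ hy => hf.sub_max a x y hR φ hφ hy⟩
  · intro φ
    constructor
    · intro h u
      obtain ⟨x, rfl⟩ := Quotient.exists_rep u
      exact (key φ (Quotient.mk t x)).mp (h _)
    · intro h u
      exact (key φ u).mpr (h _)
end

section
/- The logic K + {◇◇◇p → ◇p} does not admit strict filtration: there is a finite model M of this logic and a finite Sub-closed set Γ such that no Γ-filtration of M through the equivalence ∼_Γ itself is a model of the logic. Specifically, take M with W = {x, y, y', z, u}, R = {(x,y), (y',z), (z,u)}, θ(p) = {x}, θ(q) = {y, y'}, θ(r) = {u}, and Γ = {p, q, r, ◇r}; then any Γ-filtration of M on W/∼_Γ refutes ◇◇◇r → ◇r at [x]. -/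
def substF {A : Type} (σ : ℕ → Fm A) : Fm A → Fm A
  | .bot => .bot
  | .var n => σ n
  | .imp φ ψ => .imp (substF σ φ) (substF σ ψ)
  | .dia a φ => .dia a (substF σ φ)

def Tautology {A : Type} (φ : Fm A) : Prop :=
  ∀ v : Fm A → Prop, ¬ v Fm.bot → (∀ a b : Fm A, v (Fm.imp a b) ↔ (v a → v b)) → v φ

structure IsNormalLogic {A : Type} (L : Set (Fm A)) : Prop where
  taut : ∀ φ : Fm A, Tautology φ → φ ∈ L
  dia_bot : ∀ a : A, Fm.equiv (Fm.dia a Fm.bot) Fm.bot ∈ L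
  dia_or : ∀ (a : A) (φ ψ : Fm A),
    Fm.equiv (Fm.dia a (Fm.disj φ ψ)) (Fm.disj (Fm.dia a φ) (Fm.dia a ψ)) ∈ L
  mp : ∀ φ ψ : Fm A, Fm.imp φ ψ ∈ L → φ ∈ L → ψ ∈ L
  subst : ∀ φ ∈ L, ∀ σ : ℕ → Fm A, substF σ φ ∈ L
  mono : ∀ (a : A) (φ ψ : Fm A), Fm.imp φ ψ ∈ L → Fm.imp (Fm.dia a φ) (Fm.dia a ψ) ∈ L

def NormalClosure {A : Type} (S : Set (Fm A)) : Set (Fm A) :=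
  {φ | ∀ L : Set (Fm A), IsNormalLogic L → S ⊆ L → φ ∈ L}

/-- The five-point model: x=0, y=1, y'=2, z=3, u=4; R = {(x,y),(y',z),(z,u)}. -/
def R8 : Fin 5 → Fin 5 → Prop := fun a b =>
  (a = 0 ∧ b = 1) ∨ (a = 2 ∧ b = 3) ∨ (a = 3 ∧ b = 4)

/-- θ(p)={x}, θ(q)={y,y'}, θ(r)={u} with p,q,r = var 0,1,2. -/
def V8 : ℕ → Fin 5 → Prop := fun n w =>
  (n = 0 ∧ w = 0) ∨ (n = 1 ∧ (w = 1 ∨ w = 2)) ∨ (n = 2 ∧ w = 4)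

def M8 : Model Unit := ⟨Fin 5, fun _ => R8, V8⟩

/-- L = K + {◇◇◇p → ◇p}. -/
def L8 : Set (Fm Unit) :=
  NormalClosure
    {Fm.imp (Fm.dia () (Fm.dia () (Fm.dia () (Fm.var 0)))) (Fm.dia () (Fm.var 0))}

/-- Γ = {p, q, r, ◇r}. -/
def Γ8 : Set (Fm Unit) := {Fm.var 0, Fm.var 1, Fm.var 2, Fm.dia () (Fm.var 2)}


section Aux

lemma sat_subst {A : Type} (M : Model A) (σ : ℕ → Fm A) (φ : Fm A) (x : M.W) :
    Sat M x (substF σ φ) ↔ Sat ⟨M.W, M.R, fun n y => Sat M y (σ n)⟩ x φ := by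
  induction φ generalizing x with
  | bot => simp [Sat, substF]
  | var n => simp [Sat, substF]
  | imp φ ψ ihφ ihψ => simp [Sat, substF, ihφ, ihψ]
  | dia a φ ih => simp [Sat, substF, ih]

/-- Validity on the frame (Fin 5, R8). -/
def FV : Set (Fm Unit) := {φ | ∀ V : ℕ → Fin 5 → Prop, (⟨Fin 5, fun _ => R8, V⟩ : Model Unit).valid φ}

lemma noR3 : ∀ a b c d : Fin 5, ¬ (R8 a b ∧ R8 b c ∧ R8 c d) := by
  unfold R8; decide

lemma FV_normal : IsNormalLogic FV := by
  constructor
  · intro φ hφ V x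
    exact hφ (fun ψ => Sat ⟨Fin 5, fun _ => R8, V⟩ x ψ) (fun h => h) (fun a b => Iff.rfl)
  · intro a V x
    simp only [Fm.equiv, Fm.conj, Fm.neg, Sat]
    tauto
  · intro a φ ψ V x
    simp only [Fm.equiv, Fm.conj, Fm.disj, Fm.neg, Sat]
    intro h
    apply h
    · rintro ⟨y, hy, hs⟩ hnd2
      by_cases hA : Sat ⟨Fin 5, fun _ => R8, V⟩ y φ
      · exact absurd ⟨y, hy, hA⟩ hnd2
      · exact ⟨y, hy, hs hA⟩
    · intro h2
      by_cases hD2 : ∃ y, R8 x y ∧ Sat ⟨Fin 5, fun _ => R8, V⟩ y φ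
      · obtain ⟨y, hy, hA⟩ := hD2
        exact ⟨y, hy, fun hn => absurd hA hn⟩
      · obtain ⟨y, hy, hB⟩ := h2 hD2
        exact ⟨y, hy, fun _ => hB⟩
  · intro φ ψ h1 h2 V x
    exact h1 V x (h2 V x)
  · intro φ hφ σ V x
    rw [sat_subst]
    exact hφ (fun n y => Sat ⟨Fin 5, fun _ => R8, V⟩ y (σ n)) x
  · intro a φ ψ h V x
    rintro ⟨y, hy, hs⟩
    exact ⟨y, hy, h V y hs⟩

lemma axiom_FV :
    Fm.imp (Fm.dia () (Fm.dia () (Fm.dia () (Fm.var 0)))) (Fm.dia () (Fm.var 0)) ∈ FV := by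
  intro V x
  rintro ⟨a, ha, b, hb, c, hc, _⟩
  exact absurd ⟨ha, hb, hc⟩ (noR3 x a b c)

lemma L8_sub_FV : L8 ⊆ FV := fun φ hφ =>
  hφ FV FV_normal (by rintro ψ rfl; exact axiom_FV)

lemma normalClosure_normal {A : Type} (S : Set (Fm A)) : IsNormalLogic (NormalClosure S) := by
  constructor
  · intro φ h L hL hS; exact hL.taut φ h
  · intro a L hL hS; exact hL.dia_bot a
  · intro a φ ψ L hL hS; exact hL.dia_or a φ ψ
  · intro φ ψ h1 h2 L hL hS; exact hL.mp φ ψ (h1 L hL hS) (h2 L hL hS)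
  · intro φ h σ L hL hS; exact hL.subst φ (h L hL hS) σ
  · intro a φ ψ h L hL hS; exact hL.mono a φ ψ (h L hL hS)

lemma test_in_L8 :
    Fm.imp (Fm.dia () (Fm.dia () (Fm.dia () (Fm.var 2)))) (Fm.dia () (Fm.var 2)) ∈ L8 := by
  have hax : Fm.imp (Fm.dia () (Fm.dia () (Fm.dia () (Fm.var 0)))) (Fm.dia () (Fm.var 0)) ∈ L8 :=
    fun L hL hS => hS rfl
  exact (normalClosure_normal _).subst _ hax (fun _ => Fm.var 2)

lemma yy' : ModEqv M8 Γ8 (1 : Fin 5) (2 : Fin 5) := by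
  intro φ hφ
  rcases hφ with rfl | rfl | rfl | rfl
  · show V8 0 1 ↔ V8 0 2; unfold V8; decide
  · show V8 1 1 ↔ V8 1 2; unfold V8; decide
  · show V8 2 1 ↔ V8 2 2; unfold V8; decide
  · show (∃ y, R8 1 y ∧ V8 2 y) ↔ (∃ y, R8 2 y ∧ V8 2 y)
    unfold R8 V8; decide

end Aux

/-- K + {◇◇◇p → ◇p} does not admit strict filtration: every Γ-filtration of M8
through ∼_Γ itself refutes ◇◇◇r → ◇r at [x], hence is not a model of the logic. -/
theorem no_strict_filtration :
    M8.validSet L8 ∧ Γ8.Finite ∧ SubClosed Γ8 ∧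
    ∀ (R' : Unit → Quotient (eqvSetoid M8 Γ8) → Quotient (eqvSetoid M8 Γ8) → Prop)
      (V' : ℕ → Quotient (eqvSetoid M8 Γ8) → Prop),
      IsModalFiltration M8 Γ8 (eqvSetoid M8 Γ8) R' V' →
        ¬ Sat (filtModel M8 (eqvSetoid M8 Γ8) R' V')
            (Quotient.mk (eqvSetoid M8 Γ8) (0 : Fin 5))
            (Fm.imp (Fm.dia () (Fm.dia () (Fm.dia () (Fm.var 2)))) (Fm.dia () (Fm.var 2))) ∧
        ¬ (filtModel M8 (eqvSetoid M8 Γ8) R' V').validSet L8 := by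
  refine ⟨fun φ hφ x => L8_sub_FV hφ V8 x, ?_, ?_, ?_⟩
  · apply Set.Finite.insert; apply Set.Finite.insert; apply Set.Finite.insert
    exact Set.finite_singleton _
  · constructor
    · intro φ ψ h
      rcases h with h | h | h | h <;> exact absurd h (by simp)
    · intro a φ h
      rcases h with h | h | h | h
      · exact absurd h (by simp)
      · exact absurd h (by simp)
      · exact absurd h (by simp)
      · injection h with h1 h2; subst h2; exact Or.inr (Or.inr (Or.inl rfl))
  · intro R' V' hF
    have hmemr : Fm.var 2 ∈ Γ8 := Or.inr (Or.inr (Or.inl rfl))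
    have hmemd : Fm.dia () (Fm.var 2) ∈ Γ8 := Or.inr (Or.inr (Or.inr rfl))
    have r01 : R' () (Quotient.mk _ (0 : Fin 5)) (Quotient.mk _ (1 : Fin 5)) :=
      hF.min_sub () (0 : Fin 5) (1 : Fin 5) (Or.inl ⟨rfl, rfl⟩)
    have r23 : R' () (Quotient.mk _ (2 : Fin 5)) (Quotient.mk _ (3 : Fin 5)) :=
      hF.min_sub () (2 : Fin 5) (3 : Fin 5) (Or.inr (Or.inl ⟨rfl, rfl⟩))
    have r34 : R' () (Quotient.mk _ (3 : Fin 5)) (Quotient.mk _ (4 : Fin 5)) :=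
      hF.min_sub () (3 : Fin 5) (4 : Fin 5) (Or.inr (Or.inr ⟨rfl, rfl⟩))
    have e12 : (Quotient.mk (eqvSetoid M8 Γ8) (1 : Fin 5)) = Quotient.mk _ (2 : Fin 5) :=
      Quotient.sound yy'
    have hnot : ¬ Sat (filtModel M8 (eqvSetoid M8 Γ8) R' V')
        (Quotient.mk (eqvSetoid M8 Γ8) (0 : Fin 5))
        (Fm.imp (Fm.dia () (Fm.dia () (Fm.dia () (Fm.var 2)))) (Fm.dia () (Fm.var 2))) := by
      intro h
      have hsat4 : Sat (filtModel M8 (eqvSetoid M8 Γ8) R' V')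
          (Quotient.mk (eqvSetoid M8 Γ8) (4 : Fin 5)) (Fm.var 2) :=
        (hF.val 2 hmemr (4 : Fin 5)).mpr (Or.inr (Or.inr ⟨rfl, rfl⟩))
      have h3 : Sat (filtModel M8 (eqvSetoid M8 Γ8) R' V')
          (Quotient.mk (eqvSetoid M8 Γ8) (0 : Fin 5))
          (Fm.dia () (Fm.dia () (Fm.dia () (Fm.var 2)))) :=
        ⟨_, r01, ⟨_, e12 ▸ r23, ⟨_, r34, hsat4⟩⟩⟩
      obtain ⟨w', hw1, hw2⟩ := h h3
      obtain ⟨w, rfl⟩ := Quotient.exists_rep w'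
      have hsw : Sat M8 w (Fm.var 2) := (hF.val 2 hmemr w).mp hw2
      obtain ⟨y, hy1, hy2⟩ := hF.sub_max () (0 : Fin 5) w hw1 (Fm.var 2) hmemd hsw
      have hy1' : R8 0 y := hy1
      have hy2' : V8 2 y := hy2
      rcases hy1' with ⟨_, rfl⟩ | ⟨h, _⟩ | ⟨h, _⟩
      · exact absurd hy2' (by unfold V8; decide)
      · exact absurd h (by decide)
      · exact absurd h (by decide)
    refine ⟨hnot, fun hval => hnot (hval _ test_in_L8 _)⟩
end

section
/- Every locally tabular normal modal logic admits definable filtration. -/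
def VarsBelow {A : Type} (k : ℕ) : Fm A → Prop
  | .bot => True
  | .var n => n < k
  | .imp φ ψ => VarsBelow k φ ∧ VarsBelow k ψ
  | .dia _ φ => VarsBelow k φ

/-- For each k there are, up to L-equivalence, only finitely many formulas in
the variables p_0, …, p_{k-1}. -/
def LocallyTabular {A : Type} (L : Set (Fm A)) : Prop :=
  ∀ k : ℕ, ∃ S : Set (Fm A), S.Finite ∧
    ∀ φ : Fm A, VarsBelow k φ → ∃ ψ ∈ S, Fm.equiv φ ψ ∈ L

/-- Variable bound of a formula: one more than the largest variable index. -/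
def fmVB {A : Type} : Fm A → ℕ
  | .bot => 0
  | .var n => n + 1
  | .imp φ ψ => max (fmVB φ) (fmVB ψ)
  | .dia _ φ => fmVB φ

lemma varsBelow_of_vb_le {A : Type} {k : ℕ} :
    ∀ φ : Fm A, fmVB φ ≤ k → VarsBelow k φ
  | .bot, _ => trivial
  | .var n, h => h
  | .imp φ ψ, h => ⟨varsBelow_of_vb_le φ (le_trans (le_max_left _ _) h),
      varsBelow_of_vb_le ψ (le_trans (le_max_right _ _) h)⟩
  | .dia _ φ, h => varsBelow_of_vb_le φ h

/-- Every locally tabular normal modal logic admits definable filtration. -/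
theorem locally_tabular_admits_definable_filtration {A : Type} [Finite A]
    (L : Set (Fm A)) (hL : IsNormalLogic L) (hlt : LocallyTabular L) :
    AdmitsDefFilt L := by
  classical
  intro M hM Γ hΓfin hΓsub
  set k := hΓfin.toFinset.sup fmVB with hkdef
  have hΓk : ∀ φ ∈ Γ, VarsBelow k φ := fun φ hφ =>
    varsBelow_of_vb_le φ (Finset.le_sup (hΓfin.mem_toFinset.mpr hφ))
  obtain ⟨S, hSfin, hS⟩ := hlt k
  refine ⟨Γ ∪ S, hΓfin.union hSfin, Set.subset_union_left, ?_⟩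
  set Δ : Set (Fm A) := Γ ∪ S with hΔdef
  -- L-equivalent formulas are satisfied at the same points of M
  have hequiv : ∀ φ ψ : Fm A, Fm.equiv φ ψ ∈ L → ∀ x, Sat M x φ ↔ Sat M x ψ := by
    intro φ ψ h x
    have := hM _ h x
    simp only [Fm.equiv, Fm.conj, Fm.neg, Sat] at this
    tauto
  -- key: Δ-equivalent points agree on all formulas with variables below k
  have key : ∀ x y : M.W, ModEqv M Δ x y →
      ∀ φ : Fm A, VarsBelow k φ → (Sat M x φ ↔ Sat M y φ) := by
    intro x y hxy φ hφ
    obtain ⟨ψ, hψS, hψ⟩ := hS φ hφ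
    have h1 := hequiv _ _ hψ x
    have h2 := hequiv _ _ hψ y
    have h3 := hxy ψ (Or.inr hψS)
    tauto
  set s := eqvSetoid M Δ with hsdef
  let R' : A → Quotient s → Quotient s → Prop := fun a q r =>
    ∃ x y : M.W, q = Quotient.mk s x ∧ r = Quotient.mk s y ∧
      ∀ φ : Fm A, VarsBelow k φ → Sat M y φ → Sat M x (Fm.dia a φ)
  let V' : ℕ → Quotient s → Prop := fun n q =>
    n < k ∧ ∃ x : M.W, q = Quotient.mk s x ∧ M.V n x
  refine ⟨R', V', ?_, ?_, ?_⟩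
  · -- finiteness of the quotient
    have hΔf : Δ.Finite := hΓfin.union hSfin
    have : Finite ↥Δ := hΔf.to_subtype
    have hinj : Function.Injective
        (fun q : Quotient s => fun ψ : ↥Δ => Sat M q.out (ψ : Fm A)) := by
      intro q r h
      have hme : ModEqv M Δ q.out r.out := by
        intro φ hφ
        exact iff_of_eq (congrFun h ⟨φ, hφ⟩)
      calc q = Quotient.mk s q.out := (Quotient.out_eq q).symm
        _ = Quotient.mk s r.out := Quotient.sound hme
        _ = r := Quotient.out_eq r
    exact Finite.of_injective _ hinj
  · -- the filtration conditions
    constructor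
    · exact fun x y h φ hφ => h φ (Or.inl hφ)
    · intro n hn x
      constructor
      · rintro ⟨hnk, x', hx', hV⟩
        have hme : ModEqv M Δ x x' := Quotient.exact hx'
        exact (hme (Fm.var n) (Or.inl hn)).mpr hV
      · intro h
        exact ⟨hΓk (Fm.var n) hn, x, rfl, h⟩
    · intro a x y h
      exact ⟨x, y, rfl, rfl, fun φ _ hφ => ⟨y, h, hφ⟩⟩
    · intro a x y h φ hφΓ hy
      obtain ⟨x', y', hx, hy', hP⟩ := h
      have hφΓ' : φ ∈ Γ := hΓsub.2 a φ hφΓ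
      have hφk : VarsBelow k φ := hΓk φ hφΓ'
      have h1 : Sat M y' φ := (key y y' (Quotient.exact hy') φ hφk).mp hy
      have h2 : Sat M x' (Fm.dia a φ) := hP φ hφk h1
      exact (key x x' (Quotient.exact hx) (Fm.dia a φ) (hΓk _ hφΓ)).mpr h2
  · -- validity of L on the filtered model
    set N := filtModel M s R' V' with hNdef
    -- truth lemma
    have truth : ∀ φ : Fm A, VarsBelow k φ →
        ∀ x : M.W, Sat N (Quotient.mk s x) φ ↔ Sat M x φ := by
      intro φ
      induction φ with
      | bot => intro _ _; exact Iff.rfl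
      | var n =>
        intro hv x
        constructor
        · rintro ⟨hnk, x', hx', hV⟩
          have hme : ModEqv M Δ x x' := Quotient.exact hx'
          exact (key x x' hme (Fm.var n) hv).mpr hV
        · intro h
          exact ⟨hv, x, rfl, h⟩
      | imp φ ψ ih1 ih2 =>
        intro hv x
        have e1 := ih1 hv.1 x
        have e2 := ih2 hv.2 x
        constructor
        · intro h hx
          exact e2.mp (h (e1.mpr hx))
        · intro h hx
          exact e2.mpr (h (e1.mp hx))
      | dia a φ ih =>
        intro hv x
        constructor
        · rintro ⟨r, hR, hr⟩
          obtain ⟨y, rfl⟩ := Quotient.exists_rep r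
          obtain ⟨x', y', hx, hy, hP⟩ := hR
          have h1 : Sat M y φ := (ih hv y).mp hr
          have h2 : Sat M y' φ := (key y y' (Quotient.exact hy) φ hv).mp h1
          have h3 : Sat M x' (Fm.dia a φ) := hP φ hv h2
          exact (key x x' (Quotient.exact hx) (Fm.dia a φ) hv).mpr h3
        · rintro ⟨y, hRa, hy⟩
          exact ⟨Quotient.mk s y, ⟨x, y, rfl, rfl, fun ψ _ h => ⟨y, hRa, h⟩⟩,
            (ih hv y).mpr hy⟩
    -- pushing formulas down to variables below k
    set σ : ℕ → Fm A := fun n => if n < k then Fm.var n else Fm.bot with hσdef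
    have hsub1 : ∀ θ : Fm A, VarsBelow k (substF σ θ) := by
      intro θ
      induction θ with
      | bot => trivial
      | var n =>
        show VarsBelow k (σ n)
        by_cases h : n < k
        · simp only [hσdef, if_pos h]; exact h
        · simp only [hσdef, if_neg h]; trivial
      | imp φ ψ ih1 ih2 => exact ⟨ih1, ih2⟩
      | dia a φ ih => exact ih
    have hsub2 : ∀ (θ : Fm A) (q : Quotient s),
        Sat N q θ ↔ Sat N q (substF σ θ) := by
      intro θ
      induction θ with
      | bot => intro q; exact Iff.rfl
      | var n =>
        intro q
        show V' n q ↔ Sat N q (σ n)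
        by_cases h : n < k
        · simp only [hσdef, if_pos h]; exact Iff.rfl
        · simp only [hσdef, if_neg h]
          exact ⟨fun hc => absurd hc.1 h, fun hc => hc.elim⟩
      | imp φ ψ ih1 ih2 =>
        intro q
        have e1 := ih1 q
        have e2 := ih2 q
        constructor
        · intro hh hx; exact e2.mp (hh (e1.mpr hx))
        · intro hh hx; exact e2.mpr (hh (e1.mp hx))
      | dia a φ ih =>
        intro q
        constructor
        · rintro ⟨r, hR, hr⟩; exact ⟨r, hR, (ih r).mp hr⟩
        · rintro ⟨r, hR, hr⟩; exact ⟨r, hR, (ih r).mpr hr⟩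
    intro θ hθ q
    obtain ⟨x, rfl⟩ := Quotient.exists_rep q
    have h1 : substF σ θ ∈ L := hL.subst θ hθ σ
    have h2 : Sat M x (substF σ θ) := hM _ h1 x
    exact (hsub2 θ (Quotient.mk s x)).mpr ((truth _ (hsub1 θ) x).mpr h2)
end
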